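/- Let f be a pdf supported on [−1/4, 1/4]. For every nonzero integer j, |f̂(j)|² ≤ (‖f∗f‖_∞ / π) · sin(π / ‖f∗f‖_∞). -/

import Mathlib

open MeasureTheory
/-- Convolution of two functions on the circle `𝕋 = ℝ/ℤ` (with its Haar measure). -/
noncomputable def conv (f g : UnitAddCircle → ℝ) (c : UnitAddCircle) : ℝ := ∫ x, f x * g (c - x)

/-- A pdf on the circle: a nonnegative function in `L²` with integral 1. -/
def IsPdf (f : UnitAddCircle → ℝ) : Prop :=
  (∀ x, 0 ≤ f x) ∧ MeasureTheory.MemLp f 2 volume ∧ (∫ x, f x) = 1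

/-- The function `f` on the circle is supported on (the image of) `[-1/4, 1/4]`. -/
def SuppIn (f : UnitAddCircle → ℝ) : Prop :=
  ∀ x : UnitAddCircle, f x ≠ 0 → ∃ r : ℝ, |r| ≤ 1/4 ∧ (r : UnitAddCircle) = x

/-- The essential supremum (`L^∞` norm) of a function on the circle. -/
noncomputable def normInf (h : UnitAddCircle → ℝ) : ℝ := (eLpNorm h ⊤ volume).toReal

/-- The square of the `L²` norm of a function on the circle. -/
noncomputable def norm2sq (h : UnitAddCircle → ℝ) : ℝ := ∫ x, (h x)^2

/-- The `j`-th Fourier coefficient of a real function on the circle. -/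
noncomputable def fc (f : UnitAddCircle → ℝ) (j : ℤ) : ℂ := fourierCoeff (fun x => (f x : ℂ)) j

open Real Filter Convolution intervalIntegral


section CosLemma

private lemma psi_cont (cc : ℝ) : Continuous (fun s : ℝ => max (Real.cos (2*π*s) - cc) 0) := by
  fun_prop

private lemma psi_per (cc : ℝ) :
    Function.Periodic (fun s : ℝ => max (Real.cos (2*π*s) - cc) 0) 1 := by
  intro s
  simp only [mul_add, mul_one]
  rw [Real.cos_add_two_pi (2*π*s)]

private lemma base_integral (a : ℝ) (ha : 0 < a) (ha2 : a ≤ 1/2) :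
    ∫ s in (-(1/2) : ℝ)..(1/2), max (Real.cos (2*π*s) - Real.cos (2*π*a)) 0
      = Real.sin (2*π*a)/π - 2*a*Real.cos (2*π*a) := by
  have hπ := Real.pi_pos
  set cc := Real.cos (2*π*a) with hcc
  have hii : ∀ u v : ℝ, IntervalIntegrable (fun s => max (Real.cos (2*π*s) - cc) 0) volume u v :=
    fun u v => (psi_cont cc).intervalIntegrable u v
  have key : ∀ s : ℝ, a ≤ |s| → |s| ≤ 1/2 → max (Real.cos (2*π*s) - cc) 0 = 0 := by
    intro s h1 h2
    have : Real.cos (2*π*s) ≤ cc := by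
      rw [← Real.cos_abs (2*π*s), abs_mul, abs_of_nonneg (by positivity : (0:ℝ) ≤ 2*π)]
      exact Real.cos_le_cos_of_nonneg_of_le_pi (by positivity) (by nlinarith) (by nlinarith)
    simp [max_eq_right, sub_nonpos.mpr this]
  have key2 : ∀ s : ℝ, |s| ≤ a → max (Real.cos (2*π*s) - cc) 0 = Real.cos (2*π*s) - cc := by
    intro s h1
    have : cc ≤ Real.cos (2*π*s) := by
      rw [← Real.cos_abs (2*π*s), abs_mul, abs_of_nonneg (by positivity : (0:ℝ) ≤ 2*π)]
      exact Real.cos_le_cos_of_nonneg_of_le_pi (by positivity) (by nlinarith) (by nlinarith)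
    exact max_eq_left (by linarith)
  have split1 : ∫ s in (-(1/2) : ℝ)..(1/2), max (Real.cos (2*π*s) - cc) 0
      = (∫ s in (-(1/2) : ℝ)..(-a), max (Real.cos (2*π*s) - cc) 0)
      + (∫ s in (-a : ℝ)..a, max (Real.cos (2*π*s) - cc) 0)
      + (∫ s in (a : ℝ)..(1/2), max (Real.cos (2*π*s) - cc) 0) := by
    rw [integral_add_adjacent_intervals (hii _ _) (hii _ _),
      integral_add_adjacent_intervals (hii _ _) (hii _ _)]
  have z1 : (∫ s in (-(1/2) : ℝ)..(-a), max (Real.cos (2*π*s) - cc) 0) = 0 := by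
    rw [intervalIntegral.integral_congr (g := fun _ => (0:ℝ)), intervalIntegral.integral_zero]
    intro s hs
    rw [Set.uIcc_of_le (by linarith)] at hs
    exact key s (by rw [abs_of_nonpos (by linarith [hs.2])]; linarith [hs.2])
      (by rw [abs_of_nonpos (by linarith [hs.2])]; linarith [hs.1])
  have z2 : (∫ s in (a : ℝ)..(1/2), max (Real.cos (2*π*s) - cc) 0) = 0 := by
    rw [intervalIntegral.integral_congr (g := fun _ => (0:ℝ)), intervalIntegral.integral_zero]
    intro s hs
    rw [Set.uIcc_of_le (by linarith)] at hs
    exact key s (by rw [abs_of_nonneg (by linarith [hs.1])]; exact hs.1)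
      (by rw [abs_of_nonneg (by linarith [hs.1])]; exact hs.2)
  have mid : (∫ s in (-a : ℝ)..a, max (Real.cos (2*π*s) - cc) 0)
      = Real.sin (2*π*a)/π - 2*a*cc := by
    rw [intervalIntegral.integral_congr (g := fun s => Real.cos (2*π*s) - cc)]
    · rw [intervalIntegral.integral_sub
        ((by fun_prop : Continuous fun s : ℝ => Real.cos (2*π*s)).intervalIntegrable _ _)
        intervalIntegrable_const]
      have : ∫ s in (-a : ℝ)..a, Real.cos (2*π*s) = Real.sin (2*π*a)/π := by
        have h := intervalIntegral.integral_comp_mul_left (a := -a) (b := a) Real.cos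
          (c := 2*π) (by positivity)
        rw [h, integral_cos]
        rw [mul_neg, Real.sin_neg]
        rw [smul_eq_mul, div_eq_mul_inv, mul_inv]
        ring
      rw [this, intervalIntegral.integral_const, smul_eq_mul]
      ring
    · intro s hs
      rw [Set.uIcc_of_le (by linarith)] at hs
      exact key2 s (abs_le.mpr ⟨hs.1, hs.2⟩)
  rw [split1, z1, z2, mid]; ring

private lemma cos_part_integral_pos (j : ℤ) (hj : 0 < j) (θ a : ℝ) (ha : 0 < a)
    (ha2 : a ≤ 1/2) :
    ∫ r in (0:ℝ)..1, max (Real.cos (θ + 2*π*j*r) - Real.cos (2*π*a)) 0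
      = Real.sin (2*π*a)/π - 2*a*Real.cos (2*π*a) := by
  have hπ := Real.pi_pos
  set cc := Real.cos (2*π*a) with hcc
  set ψ : ℝ → ℝ := fun s => max (Real.cos (2*π*s) - cc) 0 with hψ
  set θ' : ℝ := θ/(2*π) with hθ'
  set φ : ℝ → ℝ := fun s => ψ (θ' + s) with hφ
  have hφc : Continuous φ := (psi_cont cc).comp (by fun_prop)
  have hφp : Function.Periodic φ 1 := by
    intro s
    show ψ (θ' + (s + 1)) = ψ (θ' + s)
    rw [← add_assoc]
    exact psi_per cc (θ' + s)
  have step0 : ∀ r : ℝ, max (Real.cos (θ + 2*π*j*r) - cc) 0 = φ ((j:ℝ) * r) := by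
    intro r
    show _ = max (Real.cos (2*π*(θ' + j*r)) - cc) 0
    congr 2
    rw [hθ', mul_add, mul_div_cancel₀ θ (by positivity : (2*π:ℝ) ≠ 0)]
    ring
  rw [intervalIntegral.integral_congr (g := fun r => φ ((j:ℝ)*r))
    (fun r _ => step0 r)]
  have hj0 : (j:ℝ) ≠ 0 := Int.cast_ne_zero.mpr (by omega)
  rw [intervalIntegral.integral_comp_mul_left φ hj0]
  rw [mul_zero, mul_one]
  have : ∫ s in (0:ℝ)..(j:ℝ), φ s = (j:ℤ) • ∫ s in (0:ℝ)..1, φ s := by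
    have h := hφp.intervalIntegral_add_zsmul_eq j 0 (fun t₁ t₂ => hφc.intervalIntegrable t₁ t₂)
    rw [zero_add, zero_add, zsmul_eq_mul, mul_one] at h
    exact h
  rw [this, zsmul_eq_mul, smul_eq_mul]
  rw [← mul_assoc, inv_mul_cancel₀ hj0, one_mul]
  have : ∫ s in (0:ℝ)..1, φ s = ∫ s in (θ'+0)..(θ'+1), ψ s :=
    intervalIntegral.integral_comp_add_left ψ θ'
  rw [add_zero] at this
  rw [this]
  have hper : Function.Periodic ψ 1 := psi_per cc
  rw [hper.intervalIntegral_add_eq θ' (-(1/2))]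
  have : (-(1/2) : ℝ) + 1 = 1/2 := by norm_num
  rw [this]
  exact base_integral a ha ha2

private lemma cos_part_integral (j : ℤ) (hj : j ≠ 0) (θ a : ℝ) (ha : 0 < a) (ha2 : a ≤ 1/2) :
    ∫ r in (0:ℝ)..1, max (Real.cos (θ + 2*π*j*r) - Real.cos (2*π*a)) 0
      = Real.sin (2*π*a)/π - 2*a*Real.cos (2*π*a) := by
  rcases lt_or_gt_of_ne hj with h | h
  · have key : ∀ r : ℝ, max (Real.cos (θ + 2*π*j*r) - Real.cos (2*π*a)) 0
        = max (Real.cos (-θ + 2*π*(-j : ℤ)*r) - Real.cos (2*π*a)) 0 := by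
      intro r
      congr 2
      rw [← Real.cos_neg (θ + 2*π*j*r)]
      congr 1
      push_cast
      ring
    rw [intervalIntegral.integral_congr (fun r _ => key r)]
    exact cos_part_integral_pos (-j) (by omega) (-θ) a ha ha2
  · exact cos_part_integral_pos j h θ a ha ha2

end CosLemma

section FourierLemma

private lemma haar_eq_volume : (AddCircle.haarAddCircle : Measure UnitAddCircle) = volume := by
  rw [AddCircle.volume_eq_smul_haarAddCircle]; simp

private lemma fc_eq (f : UnitAddCircle → ℝ) (j : ℤ) :
    fc f j = ∫ c : UnitAddCircle, fourier (-j) c * (f c : ℂ) := by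
  rw [fc, fourierCoeff, haar_eq_volume]
  simp [smul_eq_mul]

private lemma fourier_mul_add (n : ℤ) (x y : UnitAddCircle) :
    (fourier n (x + y) : ℂ) = fourier n x * fourier n y := by
  simp only [fourier_apply, smul_add]
  push_cast [AddCircle.toCircle_add]
  ring

private lemma key_identity (f : UnitAddCircle → ℝ) (hfi : Integrable f volume) (j : ℤ) :
    (fc f j)^2 = ∫ c : UnitAddCircle, fourier (-j) c * ((conv f f c : ℝ) : ℂ) := by
  classical
  set e : UnitAddCircle → ℂ := fun c => fourier (-j) c with he
  have hec : Continuous e := (fourier (-j)).continuous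
  have hfm : AEStronglyMeasurable (fun x => (f x : ℂ)) volume :=
    (Complex.continuous_ofReal.comp_aestronglyMeasurable hfi.aestronglyMeasurable)
  set F : UnitAddCircle → ℂ := fun x => e x * (f x : ℂ) with hF
  have base : Integrable (fun p : UnitAddCircle × UnitAddCircle => f p.2 * f (p.1 - p.2))
      (volume.prod volume) := hfi.convolution_integrand (ContinuousLinearMap.mul ℝ ℝ) hfi
  have baseC : Integrable (fun p : UnitAddCircle × UnitAddCircle =>
      ((f p.2 : ℂ) * (f (p.1 - p.2) : ℂ))) (volume.prod volume) := by
    have := base.ofReal (𝕜 := ℂ)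
    simpa using this
  have hPint : Integrable (fun p : UnitAddCircle × UnitAddCircle =>
      e p.1 * ((f p.2 : ℂ) * (f (p.1 - p.2) : ℂ))) (volume.prod volume) := by
    apply baseC.bdd_mul (c := 1) ((hec.comp continuous_fst).aestronglyMeasurable)
    exact Eventually.of_forall fun p => by simp [he, fourier_apply, Circle.norm_coe]
  have hτ : MeasurePreserving (fun p : UnitAddCircle × UnitAddCircle => (p.2, p.1 - p.2))
      (volume.prod volume) (volume.prod volume) :=
    measurePreserving_prod_sub_swap volume volume
  have hτm : Measurable (fun p : UnitAddCircle × UnitAddCircle => (p.2, p.1 - p.2)) :=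
    measurable_snd.prodMk (measurable_fst.sub measurable_snd)
  set Q : UnitAddCircle × UnitAddCircle → ℂ := fun q => F q.1 * F q.2 with hQ
  have hQm : AEStronglyMeasurable Q (volume.prod volume) := by
    have h1 : AEStronglyMeasurable F volume := ((hec.aestronglyMeasurable).mul hfm)
    exact h1.comp_fst.mul h1.comp_snd
  have step2 : (∫ p : UnitAddCircle × UnitAddCircle,
      e p.1 * ((f p.2 : ℂ) * (f (p.1 - p.2) : ℂ)) ∂(volume.prod volume)) = (fc f j)^2 := by
    have hPQ : ∀ p : UnitAddCircle × UnitAddCircle,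
        e p.1 * ((f p.2 : ℂ) * (f (p.1 - p.2) : ℂ)) = Q (p.2, p.1 - p.2) := by
      intro p
      show _ = (e p.2 * _) * (e (p.1 - p.2) * _)
      have : e p.2 * e (p.1 - p.2) = e p.1 := by
        rw [he]
        simp only []
        rw [← fourier_mul_add (-j) p.2 (p.1 - p.2), add_sub_cancel]
      calc e p.1 * ((f p.2 : ℂ) * (f (p.1 - p.2) : ℂ))
          = (e p.2 * e (p.1 - p.2)) * ((f p.2 : ℂ) * (f (p.1 - p.2) : ℂ)) := by rw [this]
        _ = _ := by ring
    calc (∫ p : UnitAddCircle × UnitAddCircle,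
        e p.1 * ((f p.2 : ℂ) * (f (p.1 - p.2) : ℂ)) ∂(volume.prod volume))
        = ∫ p, Q ((fun p : UnitAddCircle × UnitAddCircle => (p.2, p.1 - p.2)) p)
            ∂(volume.prod volume) := by
          exact integral_congr_ae (Eventually.of_forall hPQ)
      _ = ∫ q, Q q ∂((volume.prod volume).map
            (fun p : UnitAddCircle × UnitAddCircle => (p.2, p.1 - p.2))) := by
          rw [integral_map hτm.aemeasurable]
          rw [hτ.map_eq]
          exact hQm
      _ = ∫ q, Q q ∂(volume.prod volume) := by rw [hτ.map_eq]
      _ = (∫ x, F x) * (∫ x, F x) := integral_prod_mul F F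
      _ = (fc f j)^2 := by rw [fc_eq]; ring
  rw [← step2, MeasureTheory.integral_prod _ hPint]
  congr 1
  ext c
  show ∫ y, e c * ((f y : ℂ) * (f (c - y) : ℂ)) = _
  rw [MeasureTheory.integral_const_mul]
  congr 1
  rw [conv]
  rw [show ((∫ x : UnitAddCircle, f x * f (c - x) : ℝ) : ℂ)
      = ∫ x : UnitAddCircle, ((f x * f (c - x) : ℝ) : ℂ) from (integral_ofReal (𝕜 := ℂ)).symm]
  exact integral_congr_ae (Eventually.of_forall fun x => by push_cast; ring)

end FourierLemma

theorem fhat_green_bound (f : UnitAddCircle → ℝ) (hf : IsPdf f) (hsupp : SuppIn f)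
    (j : ℤ) (hj : j ≠ 0) :
    ‖fc f j‖ ^ 2 ≤ normInf (conv f f) / Real.pi * Real.sin (Real.pi / normInf (conv f f)) := by
  classical
  obtain ⟨hf0, hf2, hf1⟩ := hf
  have hπ := Real.pi_pos
  haveI : IsProbabilityMeasure (volume : Measure UnitAddCircle) :=
    ⟨UnitAddCircle.measure_univ⟩
  have hfi : Integrable f volume := hf2.integrable one_le_two
  set g : UnitAddCircle → ℝ := conv f f with hgdef
  have hgi : Integrable g volume :=
    hfi.integrable_convolution (ContinuousLinearMap.mul ℝ ℝ) hfi
  have hgint : ∫ c, g c = 1 := by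
    have := integral_convolution (ContinuousLinearMap.mul ℝ ℝ) hfi hfi
    have h2 : ∫ c, g c = (∫ x, f x) * (∫ x, f x) := this
    rw [h2, hf1, mul_one]
  have hg0 : ∀ c, 0 ≤ g c := fun c =>
    integral_nonneg fun x => mul_nonneg (hf0 x) (hf0 _)
  -- pointwise bound for g
  have hsq : Integrable (fun x => (f x)^2) volume := hf2.integrable_sq
  set B : ℝ := ∫ x, (f x)^2 with hB
  have hB0 : 0 ≤ B := integral_nonneg fun x => sq_nonneg _
  have hgB : ∀ c, g c ≤ B := by
    intro c
    have htr : Integrable (fun x => (f (c - x))^2) volume := hsq.comp_sub_left c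
    by_cases hc : Integrable (fun x => f x * f (c - x)) volume
    · have hle : ∀ x, f x * f (c - x) ≤ ((f x)^2 + (f (c - x))^2)/2 := by
        intro x
        nlinarith [sq_nonneg (f x - f (c - x))]
      have h1 : g c ≤ ∫ x, ((f x)^2 + (f (c - x))^2)/2 :=
        integral_mono hc ((hsq.add htr).div_const 2) hle
      have h2 : ∫ x, ((f x)^2 + (f (c - x))^2)/2
          = ((∫ x, (f x)^2) + ∫ x, (f (c - x))^2)/2 := by
        rw [MeasureTheory.integral_div, integral_add hsq htr]
      have h3 : ∫ x, (f (c - x))^2 = B := integral_sub_left_eq_self (fun x => (f x)^2) volume c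
      rw [h2, h3] at h1
      linarith
    · have : g c = 0 := integral_undef hc
      rw [this]; exact hB0
  set M : ℝ := normInf g with hMdef
  have htop : eLpNorm g ⊤ volume ≠ ⊤ := by
    rw [eLpNorm_exponent_top]
    exact (eLpNormEssSup_lt_top_of_ae_bound (C := B)
      (Eventually.of_forall fun c => by
        rw [Real.norm_eq_abs, abs_of_nonneg (hg0 c)]; exact hgB c)).ne
  have hMae : ∀ᵐ c, g c ≤ M := by
    filter_upwards [enorm_ae_le_eLpNormEssSup g volume] with c hc
    have h1 : ((‖g c‖₊ : ENNReal)).toReal ≤ (eLpNormEssSup g volume).toReal :=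
      ENNReal.toReal_mono (by rw [← eLpNorm_exponent_top]; exact htop) hc
    have h2 : ((‖g c‖₊ : ENNReal)).toReal = ‖g c‖ := by simp
    have h3 : M = (eLpNormEssSup g volume).toReal := by
      rw [hMdef, normInf, eLpNorm_exponent_top]
    rw [h2] at h1
    rw [h3]
    calc g c ≤ ‖g c‖ := le_abs_self _
      _ ≤ _ := h1
  have hM1 : (1:ℝ) ≤ M := by
    have := integral_mono_ae hgi (integrable_const M) hMae
    rw [hgint, MeasureTheory.integral_const] at this
    simpa using this
  have hMpos : (0:ℝ) < M := lt_of_lt_of_le one_pos hM1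
  -- Fourier identity
  have key := key_identity f hfi j
  set K : ℂ := ∫ c : UnitAddCircle, fourier (-j) c * ((g c : ℝ) : ℂ) with hK
  have hnorm : ‖fc f j‖^2 = ‖K‖ := by
    rw [← norm_pow, key]
  -- choose u
  obtain ⟨u, hu1, huK⟩ : ∃ u : ℂ, ‖u‖ = 1 ∧ u * K = (‖K‖ : ℂ) := by
    by_cases h0 : K = 0
    · exact ⟨1, by simp, by simp [h0]⟩
    · refine ⟨(‖K‖ : ℂ) / K, ?_, ?_⟩
      · rw [norm_div]
        simp [norm_div, h0, Complex.norm_real]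
      · field_simp
  set h : UnitAddCircle → ℝ := fun c => (u * fourier (-j) c).re with hh
  have hhc : Continuous h :=
    Complex.continuous_re.comp (continuous_const.mul (fourier (-j)).continuous)
  have hhb : ∀ c, |h c| ≤ 1 := by
    intro c
    calc |h c| ≤ ‖u * fourier (-j) c‖ := Complex.abs_re_le_norm _
      _ = ‖u‖ * ‖(fourier (-j) c : ℂ)‖ := by rw [norm_mul]
      _ ≤ 1 := by rw [hu1]; simp [fourier_apply, Circle.norm_coe]
  -- ‖K‖ = ∫ h g
  have hint1 : Integrable (fun c => (u * fourier (-j) c) * ((g c : ℝ) : ℂ)) volume := by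
    apply (hgi.ofReal (𝕜 := ℂ)).bdd_mul (c := 1)
      ((continuous_const.mul (fourier (-j)).continuous).aestronglyMeasurable)
    exact Eventually.of_forall fun c => by rw [Pi.mul_apply, norm_mul, hu1]; simp [fourier_apply, Circle.norm_coe]
  have hKre : ‖K‖ = ∫ c, h c * g c := by
    have hint1' : Integrable (fun c => u * (fourier (-j) c * ((g c : ℝ) : ℂ))) volume := by
      simpa [mul_assoc] using hint1
    have e1 : u * K = ∫ c, u * (fourier (-j) c * ((g c : ℝ) : ℂ)) :=
      (MeasureTheory.integral_const_mul u _).symm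
    have e2 : (∫ c, u * (fourier (-j) c * ((g c : ℝ) : ℂ))).re
        = ∫ c, (u * (fourier (-j) c * ((g c : ℝ) : ℂ))).re := by
      have := integral_re (𝕜 := ℂ) hint1'
      simpa using this.symm
    have e3 : ∀ c, (u * (fourier (-j) c * ((g c : ℝ) : ℂ))).re = h c * g c := by
      intro c
      rw [← mul_assoc, Complex.mul_re]
      simp [hh]
    calc ‖K‖ = ((‖K‖ : ℂ)).re := by simp
      _ = (u * K).re := by rw [huK]
      _ = ∫ c, (u * (fourier (-j) c * ((g c : ℝ) : ℂ))).re := by rw [e1, e2]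
      _ = ∫ c, h c * g c := integral_congr_ae (Eventually.of_forall e3)
  -- bathtub
  set a : ℝ := 1/(2*M) with ha
  have ha0 : 0 < a := by positivity
  have ha2 : a ≤ 1/2 := by
    rw [ha, div_le_div_iff₀ (by positivity) (by norm_num)]
    linarith
  set cc : ℝ := Real.cos (2*π*a) with hcc
  have hcc1 : |cc| ≤ 1 := Real.abs_cos_le_one _
  set I : ℝ := ∫ c, max (h c - cc) 0 with hI
  have hmaxc : Continuous (fun c => max (h c - cc) 0) :=
    (hhc.sub continuous_const).max continuous_const
  have hmaxi : Integrable (fun c => max (h c - cc) 0) volume :=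
    hmaxc.integrable_of_hasCompactSupport (isClosed_closure.isCompact)
  have hint2 : Integrable (fun c => (h c - cc) * g c) volume := by
    apply hgi.bdd_mul (c := 1 + |cc|) ((hhc.sub continuous_const).aestronglyMeasurable)
    exact Eventually.of_forall fun c => by
      rw [Real.norm_eq_abs]
      calc |h c - cc| ≤ |h c| + |cc| := abs_sub _ _
        _ ≤ 1 + |cc| := by linarith [hhb c]
  have hint3 : Integrable (fun c => max (h c - cc) 0 * g c) volume := by
    apply hgi.bdd_mul (c := 1 + |cc|) (hmaxc.aestronglyMeasurable)
    exact Eventually.of_forall fun c => by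
      rw [Real.norm_eq_abs, abs_of_nonneg (le_max_right _ _)]
      calc max (h c - cc) 0 ≤ |h c - cc| := max_le (le_abs_self _) (abs_nonneg _)
        _ ≤ |h c| + |cc| := abs_sub _ _
        _ ≤ 1 + |cc| := by linarith [hhb c]
  have hint4 : Integrable (fun c => h c * g c) volume := by
    apply hgi.bdd_mul (c := 1) (hhc.aestronglyMeasurable)
    exact Eventually.of_forall fun c => by rw [Real.norm_eq_abs]; exact hhb c
  have bathtub : ∫ c, h c * g c ≤ M * I + cc := by
    have s1 : ∫ c, h c * g c = (∫ c, (h c - cc) * g c) + cc := by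
      have : ∀ c, h c * g c = (h c - cc) * g c + cc * g c := fun c => by ring
      rw [integral_congr_ae (Eventually.of_forall this),
        integral_add hint2 (hgi.const_mul cc), MeasureTheory.integral_const_mul, hgint, mul_one]
    have s2 : (∫ c, (h c - cc) * g c) ≤ ∫ c, max (h c - cc) 0 * g c := by
      apply integral_mono hint2 hint3
      intro c
      exact mul_le_mul_of_nonneg_right (le_max_left _ _) (hg0 c)
    have s3 : (∫ c, max (h c - cc) 0 * g c) ≤ ∫ c, M * max (h c - cc) 0 := by
      apply integral_mono_ae hint3 (hmaxi.const_mul M)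
      filter_upwards [hMae] with c hc
      rw [mul_comm (M : ℝ)]
      exact mul_le_mul_of_nonneg_left hc (le_max_right _ _)
    have s4 : (∫ c, M * max (h c - cc) 0) = M * I := by
      rw [MeasureTheory.integral_const_mul]
    linarith
  -- compute I
  have hIval : I = Real.sin (2*π*a)/π - 2*a*cc := by
    have hpre := UnitAddCircle.intervalIntegral_preimage 0 (fun c => max (h c - cc) 0)
    rw [zero_add] at hpre
    have hptw : ∀ r : ℝ, max (h (r : UnitAddCircle) - cc) 0
        = max (Real.cos (u.arg + 2*π*((-j : ℤ)) * r) - cc) 0 := by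
      intro r
      congr 2
      have hu : u = Complex.exp (u.arg * Complex.I) := by
        conv_lhs => rw [← Complex.norm_mul_exp_arg_mul_I u]
        rw [hu1]
        simp
      have hf4 : (fourier (-j) (r : UnitAddCircle) : ℂ)
          = Complex.exp ((2*π*((-j:ℤ)) * r : ℝ) * Complex.I) := by
        rw [fourier_coe_apply]
        congr 1
        push_cast
        ring
      show (u * fourier (-j) (r : UnitAddCircle)).re = _
      conv_lhs => rw [hu, hf4, ← Complex.exp_add]
      rw [show (u.arg : ℂ) * Complex.I + ((2*π*((-j:ℤ)) * r : ℝ) : ℂ) * Complex.I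
          = ((u.arg + 2*π*((-j:ℤ)) * r : ℝ) : ℂ) * Complex.I by push_cast; ring]
      rw [Complex.exp_ofReal_mul_I_re]
    rw [hI, ← hpre]
    rw [intervalIntegral.integral_congr (fun r _ => hptw r), hcc]
    exact cos_part_integral (-j) (neg_ne_zero.mpr hj) u.arg a ha0 ha2
  -- final assembly
  have h2pa : 2*π*a = π/M := by
    rw [ha]
    field_simp
  have hfinal : ‖K‖ ≤ M / π * Real.sin (π / M) := by
    rw [hKre]
    calc ∫ c, h c * g c ≤ M * I + cc := bathtub
      _ = M * (Real.sin (2*π*a)/π - 2*a*cc) + cc := by rw [hIval]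
      _ = M / π * Real.sin (2*π*a) - M * (2*a) * cc + cc := by ring
      _ = M / π * Real.sin (π / M) := by
          rw [h2pa]
          have : M * (2*a) = 1 := by
            rw [ha]; field_simp
          rw [this]; ring
  rw [hnorm]
  exact hfinal
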